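/- Fix H ∈ (0,1) and an integer n ≥ 1, and let X = (X_0, ..., X_{n−1}) be a centered Gaussian random vector with covariance E[X_k X_l] = ρ_H(k−l)/n^{2H}. Define Z_n = n^{2H−1/2}·Σ_{k=0}^{n−1} X_k² − √n·(4 − 4^H) and Q_2 = 2·n^{4H−1}·Σ_{k,l=0}^{n−1} X_k X_l · ρ_H(k−l)/n^{2H}. Then, almost surely, Q_2 ≤ α_n·Z_n + β, where α_n = (2/√n)·Σ_{r∈ℤ}|ρ_H(r)| and β = 6·Σ_{r∈ℤ}|ρ_H(r)|. -/

import Mathlib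

open MeasureTheory ProbabilityTheory Real

/-- `ρ_H(r)` from the paper. Here `x ^ y` with real exponent denotes `Real.rpow`. -/
noncomputable def rhoH (H : ℝ) (r : ℤ) : ℝ :=
  (-(|(r : ℝ) - 2| ^ (2 * H)) + 4 * |(r : ℝ) - 1| ^ (2 * H) - 6 * |(r : ℝ)| ^ (2 * H)
      + 4 * |(r : ℝ) + 1| ^ (2 * H) - |(r : ℝ) + 2| ^ (2 * H)) / 2


open Set in
lemma secondDiffMVT (h h' h'' : ℝ → ℝ) (x : ℝ)
    (hd : ∀ y ∈ Set.Icc (x-1) (x+1), HasDerivAt h (h' y) y)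
    (hd2 : ∀ y ∈ Set.Icc (x-1) (x+1), HasDerivAt h' (h'' y) y) :
    ∃ ξ ∈ Set.Ioo (x-1) (x+1), h (x+1) - 2 * h x + h (x-1) = h'' ξ := by
  set F : ℝ → ℝ := fun t => h (x+t) + h (x-t) - 2 * h x with hF
  set F' : ℝ → ℝ := fun t => h' (x+t) - h' (x-t) with hF'
  have hmem : ∀ t ∈ Icc (0:ℝ) 1, (x + t ∈ Icc (x-1) (x+1)) ∧ (x - t ∈ Icc (x-1) (x+1)) := by
    intro t ht
    constructor <;> constructor <;> nlinarith [ht.1, ht.2]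
  have hFd : ∀ t ∈ Icc (0:ℝ) 1, HasDerivAt F (F' t) t := by
    intro t ht
    have h1 : HasDerivAt (fun t => h (x + t)) (h' (x + t)) t := by
      simpa [Function.comp_def] using (HasDerivAt.comp t (hd _ (hmem t ht).1) ((hasDerivAt_id t).const_add x))
    have h2 : HasDerivAt (fun t => h (x - t)) (-(h' (x - t))) t := by
      simpa [Function.comp_def] using (HasDerivAt.comp t (hd _ (hmem t ht).2) ((hasDerivAt_id t).neg.const_add x))
    simpa [hF, hF', ← sub_eq_add_neg] using (h1.add h2).sub_const (2 * h x)
  have hFc : ContinuousOn F (Icc 0 1) := fun t ht => ((hFd t ht).continuousAt).continuousWithinAt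
  have hGd : ∀ t ∈ Ioo (0:ℝ) 1, HasDerivAt (fun t : ℝ => t^2) (2*t) t := by
    intro t _; simpa [mul_comm] using (hasDerivAt_pow 2 t)
  obtain ⟨c, hc, hcc⟩ := exists_ratio_hasDerivAt_eq_ratio_slope F F' (by norm_num : (0:ℝ) < 1)
    hFc (fun t ht => hFd t (Ioo_subset_Icc_self ht)) (fun t : ℝ => t^2) (fun t => 2*t)
    (continuous_pow 2).continuousOn hGd
  -- hcc : ((1:ℝ)^2 - 0^2) * F' c = (F 1 - F 0) * (2*c)
  have hc0 : 0 < c := hc.1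
  have hxc : x - c < x + c := by linarith
  have hsub : Icc (x-c) (x+c) ⊆ Icc (x-1) (x+1) := by
    apply Icc_subset_Icc <;> linarith [hc.2]
  obtain ⟨ξ, hξ, hξeq⟩ := exists_hasDerivAt_eq_slope h' h'' hxc
    (fun y hy => ((hd2 y (hsub hy)).continuousAt).continuousWithinAt)
    (fun y hy => hd2 y (hsub (Ioo_subset_Icc_self hy)))
  refine ⟨ξ, ⟨by linarith [hξ.1, hc.2], by linarith [hξ.2, hc.2]⟩, ?_⟩
  have h2c : (x + c) - (x - c) = 2 * c := by ring
  rw [h2c] at hξeq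
  have : h' (x + c) - h' (x - c) = h'' ξ * (2 * c) := by
    field_simp at hξeq; linarith [hξeq]
  have hF1 : F 1 - F 0 = h (x+1) - 2 * h x + h (x-1) := by simp [hF]; ring
  have hcc' : h' (x + c) - h' (x - c) = (F 1 - F 0) * (2 * c) := by
    have := hcc; norm_num at this; exact this
  rw [this] at hcc'
  have h2cne : (2:ℝ) * c ≠ 0 := by positivity
  have hfin := mul_right_cancel₀ h2cne hcc'.symm
  rw [← hF1, ← hfin]

lemma hasDerivAt_cmul_rpow (c q : ℝ) {x : ℝ} (hx : 0 < x) :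
    HasDerivAt (fun y : ℝ => c * y ^ q) ((c * q) * x ^ (q - 1)) x := by
  simpa [mul_assoc] using (Real.hasDerivAt_rpow_const (p := q) (Or.inl hx.ne')).const_mul c

lemma secondDiff_hasDerivAt (f f' : ℝ → ℝ) (hf : ∀ y : ℝ, 0 < y → HasDerivAt f (f' y) y)
    (x : ℝ) (hx : 1 < x) :
    HasDerivAt (fun y => f (y+1) - 2 * f y + f (y-1))
      (f' (x+1) - 2 * f' x + f' (x-1)) x := by
  have h1 : HasDerivAt (fun y : ℝ => f (y+1)) (f' (x+1)) x := by
    simpa [Function.comp_def] using (HasDerivAt.comp x (hf _ (by simp only [id_eq]; linarith)) ((hasDerivAt_id x).add_const 1))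
  have h2 : HasDerivAt (fun y : ℝ => f (y-1)) (f' (x-1)) x := by
    simpa [Function.comp_def] using (HasDerivAt.comp x (hf _ (by simp only [id_eq]; linarith)) ((hasDerivAt_id x).sub_const 1))
  exact (h1.sub ((hf x (by linarith)).const_mul 2)).add h2

open Set in
lemma rhoH_bound (H : ℝ) (hH : H ∈ Set.Ioo (0 : ℝ) 1) (r : ℤ) (hr : 3 ≤ r) :
    |rhoH H r| ≤ 12 * ((r : ℝ) - 2) ^ (2 * H - 4) := by
  obtain ⟨hH0, hH1⟩ := hH
  set p := 2 * H with hp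
  have hp0 : 0 < p := by positivity
  have hp2 : p < 2 := by simp [hp]; linarith
  set f0 : ℝ → ℝ := fun x => 1 * x ^ p with hf0
  set f1 : ℝ → ℝ := fun x => (1 * p) * x ^ (p-1) with hf1
  set f2 : ℝ → ℝ := fun x => (1 * p * (p-1)) * x ^ (p-2) with hf2
  set f3 : ℝ → ℝ := fun x => (1 * p * (p-1) * (p-2)) * x ^ (p-3) with hf3
  set f4 : ℝ → ℝ := fun x => (1 * p * (p-1) * (p-2) * (p-3)) * x ^ (p-4) with hf4
  have hd0 : ∀ y : ℝ, 0 < y → HasDerivAt f0 (f1 y) y := fun y hy =>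
    hasDerivAt_cmul_rpow 1 p hy
  have hd1 : ∀ y : ℝ, 0 < y → HasDerivAt f1 (f2 y) y := fun y hy => by
    have := hasDerivAt_cmul_rpow (1 * p) (p-1) hy
    rwa [show p - 1 - 1 = p - 2 by ring] at this
  have hd2 : ∀ y : ℝ, 0 < y → HasDerivAt f2 (f3 y) y := fun y hy => by
    have := hasDerivAt_cmul_rpow (1 * p * (p-1)) (p-2) hy
    rwa [show p - 2 - 1 = p - 3 by ring] at this
  have hd3 : ∀ y : ℝ, 0 < y → HasDerivAt f3 (f4 y) y := fun y hy => by
    have := hasDerivAt_cmul_rpow (1 * p * (p-1) * (p-2)) (p-3) hy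
    rwa [show p - 3 - 1 = p - 4 by ring] at this
  set g : ℝ → ℝ := fun x => f0 (x+1) - 2 * f0 x + f0 (x-1) with hg
  set g1 : ℝ → ℝ := fun x => f1 (x+1) - 2 * f1 x + f1 (x-1) with hg1
  set g2 : ℝ → ℝ := fun x => f2 (x+1) - 2 * f2 x + f2 (x-1) with hg2
  have hr3 : (3 : ℝ) ≤ (r : ℝ) := by exact_mod_cast hr
  -- first MVT at x = r
  obtain ⟨ξ, hξ, hξeq⟩ := secondDiffMVT g g1 g2 (r : ℝ)
    (fun y hy => secondDiff_hasDerivAt f0 f1 hd0 y (by linarith [hy.1]))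
    (fun y hy => secondDiff_hasDerivAt f1 f2 hd1 y (by linarith [hy.1]))
  -- second MVT at x = ξ
  obtain ⟨η, hη, hηeq⟩ := secondDiffMVT f2 f3 f4 ξ
    (fun y hy => hd2 y (by have := hξ.1; have := hy.1; linarith))
    (fun y hy => hd3 y (by have := hξ.1; have := hy.1; linarith))
  have hηpos : (r : ℝ) - 2 < η := by have := hξ.1; have := hη.1; linarith
  have hr2pos : (0 : ℝ) < (r : ℝ) - 2 := by linarith
  -- the fourth difference equals f4 η
  have hD : f0 ((r:ℝ)+2) - 4 * f0 ((r:ℝ)+1) + 6 * f0 (r:ℝ) - 4 * f0 ((r:ℝ)-1) + f0 ((r:ℝ)-2)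
      = f4 η := by
    have : g ((r:ℝ)+1) - 2 * g (r:ℝ) + g ((r:ℝ)-1)
        = f0 ((r:ℝ)+2) - 4 * f0 ((r:ℝ)+1) + 6 * f0 (r:ℝ) - 4 * f0 ((r:ℝ)-1) + f0 ((r:ℝ)-2) := by
      simp only [hg]; ring_nf
    rw [← this, hξeq]
    have : g2 ξ = f2 (ξ+1) - 2 * f2 ξ + f2 (ξ-1) := rfl
    rw [this, ← hηeq]
  -- rewrite rhoH without absolute values
  have habs : rhoH H r = -(f0 ((r:ℝ)+2) - 4 * f0 ((r:ℝ)+1) + 6 * f0 (r:ℝ)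
      - 4 * f0 ((r:ℝ)-1) + f0 ((r:ℝ)-2)) / 2 := by
    unfold rhoH
    rw [abs_of_nonneg (by linarith : (0:ℝ) ≤ (r:ℝ) - 2),
        abs_of_nonneg (by linarith : (0:ℝ) ≤ (r:ℝ) - 1),
        abs_of_nonneg (by linarith : (0:ℝ) ≤ (r:ℝ)),
        abs_of_nonneg (by linarith : (0:ℝ) ≤ (r:ℝ) + 1),
        abs_of_nonneg (by linarith : (0:ℝ) ≤ (r:ℝ) + 2)]
    simp only [hf0, ← hp]
    ring
  rw [habs, hD]
  rw [abs_div, abs_neg]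
  have hc : |1 * p * (p-1) * (p-2) * (p-3)| ≤ 12 := by
    rw [abs_mul, abs_mul, abs_mul, abs_mul, abs_one, one_mul]
    have h1 : |p| ≤ 2 := abs_le.mpr ⟨by linarith, by linarith⟩
    have h2 : |p - 1| ≤ 1 := abs_le.mpr ⟨by linarith, by linarith⟩
    have h3 : |p - 2| ≤ 2 := abs_le.mpr ⟨by linarith, by linarith⟩
    have h4 : |p - 3| ≤ 3 := abs_le.mpr ⟨by linarith, by linarith⟩
    calc |p| * |p-1| * |p-2| * |p-3| ≤ 2 * 1 * 2 * 3 := by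
          gcongr <;> positivity
      _ = 12 := by norm_num
  have hηp : (0:ℝ) < η := by linarith
  have hrpow : η ^ (p - 4) ≤ ((r:ℝ) - 2) ^ (p - 4) :=
    Real.rpow_le_rpow_of_nonpos hr2pos hηpos.le (by linarith)
  have hrpow0 : (0:ℝ) ≤ η ^ (p - 4) := Real.rpow_nonneg hηp.le _
  have : |f4 η| ≤ 12 * ((r:ℝ) - 2) ^ (p - 4) := by
    simp only [hf4]
    rw [abs_mul, abs_of_nonneg hrpow0]
    calc |1 * p * (p-1) * (p-2) * (p-3)| * η ^ (p-4) ≤ 12 * η ^ (p-4) := by gcongr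
      _ ≤ 12 * ((r:ℝ) - 2) ^ (p-4) := by
          have h12 : (0:ℝ) ≤ 12 := by norm_num
          exact mul_le_mul_of_nonneg_left hrpow h12
  have h2 : |f4 η| / 2 ≤ 12 * ((r:ℝ) - 2) ^ (p - 4) := by
    have : (0:ℝ) ≤ 12 * ((r:ℝ) - 2) ^ (p - 4) := by positivity
    linarith [abs_nonneg (f4 η)]
  simpa [abs_of_nonneg, show |(2:ℝ)| = 2 by norm_num] using h2

lemma rhoH_neg (H : ℝ) (r : ℤ) : rhoH H (-r) = rhoH H r := by
  unfold rhoH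
  push_cast
  rw [show -(r:ℝ) - 2 = -((r:ℝ)+2) by ring, show -(r:ℝ) - 1 = -((r:ℝ)+1) by ring,
      show -(r:ℝ) + 1 = -((r:ℝ)-1) by ring, show -(r:ℝ) + 2 = -((r:ℝ)-2) by ring,
      abs_neg, abs_neg, abs_neg, abs_neg, abs_neg]
  ring

lemma rhoH_summable (H : ℝ) (hH : H ∈ Set.Ioo (0 : ℝ) 1) :
    Summable (fun r : ℤ => |rhoH H r|) := by
  have hmaj : Summable (fun m : ℕ => 12 * ((m:ℝ)+1) ^ (2*H - 4)) := by
    have h1 : Summable (fun m : ℕ => ((m:ℝ)) ^ (2*H - 4)) :=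
      Real.summable_nat_rpow.mpr (by linarith [hH.2])
    have h2 : Summable (fun m : ℕ => (((m+1:ℕ)):ℝ) ^ (2*H - 4)) :=
      (summable_nat_add_iff (f := fun m : ℕ => ((m:ℝ)) ^ (2*H - 4)) 1).mpr h1
    have he : (fun m : ℕ => (((m+1:ℕ)):ℝ) ^ (2*H - 4)) = fun m : ℕ => ((m:ℝ)+1) ^ (2*H - 4) := by
      funext m; congr 1; push_cast; ring
    exact (he ▸ h2).mul_left 12
  have key : Summable (fun m : ℕ => |rhoH H ((m:ℤ) + 3)|) := by
    apply Summable.of_nonneg_of_le (fun _ => abs_nonneg _) (fun m => ?_) hmaj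
    have := rhoH_bound H hH ((m:ℤ)+3) (by omega)
    calc |rhoH H ((m:ℤ)+3)| ≤ 12 * ((((m:ℤ)+3 : ℤ):ℝ) - 2) ^ (2*H-4) := this
      _ = 12 * ((m:ℝ)+1) ^ (2*H-4) := by push_cast; ring_nf
  have hnat : Summable (fun m : ℕ => |rhoH H (m:ℤ)|) := by
    apply (summable_nat_add_iff (f := fun m : ℕ => |rhoH H (m:ℤ)|) 3).mp
    have he : (fun m : ℕ => |rhoH H ((m + 3 : ℕ) : ℤ)|) = fun m : ℕ => |rhoH H ((m:ℤ) + 3)| := by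
      funext m; norm_num
    exact he ▸ key
  exact Summable.of_nat_of_neg (f := fun r : ℤ => |rhoH H r|) hnat
    (by simpa [rhoH_neg] using hnat)

lemma sum_abs_rhoH_le (H : ℝ) (hsum : Summable fun r : ℤ => |rhoH H r|) (n : ℕ) (k : ℤ) :
    ∑ l : Fin n, |rhoH H (k - (l : ℤ))| ≤ ∑' r : ℤ, |rhoH H r| := by
  have hinj : ∀ a ∈ Finset.univ, ∀ b ∈ Finset.univ,
      (fun l : Fin n => k - (l : ℤ)) a = (fun l : Fin n => k - (l : ℤ)) b → a = b := by
    intro a _ b _ hab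
    simp only at hab
    have : (a : ℤ) = b := by linarith
    exact Fin.ext (by exact_mod_cast this)
  calc ∑ l : Fin n, |rhoH H (k - (l : ℤ))|
      = ∑ r ∈ Finset.image (fun l : Fin n => k - (l : ℤ)) Finset.univ, |rhoH H r| :=
        (Finset.sum_image (f := fun r : ℤ => |rhoH H r|) hinj).symm
    _ ≤ ∑' r : ℤ, |rhoH H r| := Summable.sum_le_tsum _ (fun _ _ => abs_nonneg _) hsum


/-- `X` is a centered Gaussian random vector with covariance matrix `R` under `P`:
every linear combination of the coordinates is a centered real Gaussian, with the
variance prescribed by `R`. -/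
def IsCenteredGaussianVec {Ω : Type*} [MeasurableSpace Ω] (P : Measure Ω) {N : ℕ}
    (X : Ω → Fin N → ℝ) (R : Fin N → Fin N → ℝ) : Prop :=
  (∀ k, Measurable fun ω => X ω k) ∧
    ∀ c : Fin N → ℝ,
      P.map (fun ω => ∑ k, c k * X ω k) =
        gaussianReal 0 (∑ k, ∑ l, c k * c l * R k l).toNNReal

theorem stmt_10 (H : ℝ) (hH : H ∈ Set.Ioo (0 : ℝ) 1) (n : ℕ) (hn : 1 ≤ n)
    {Ω : Type*} [MeasurableSpace Ω] (P : Measure Ω) [IsProbabilityMeasure P]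
    (X : Ω → Fin n → ℝ)
    (hX : IsCenteredGaussianVec P X
      (fun k l => rhoH H ((k : ℤ) - (l : ℤ)) / (n : ℝ) ^ (2 * H)))
    (Z Q₂ : Ω → ℝ)
    (hZ : ∀ ω, Z ω = (n : ℝ) ^ (2 * H - 1/2) * ∑ k, (X ω k) ^ 2
        - Real.sqrt n * (4 - (4 : ℝ) ^ H))
    (hQ₂ : ∀ ω, Q₂ ω = 2 * (n : ℝ) ^ (4 * H - 1) *
        ∑ k, ∑ l, X ω k * X ω l * (rhoH H ((k : ℤ) - (l : ℤ)) / (n : ℝ) ^ (2 * H))) :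
    ∀ᵐ ω ∂P, Q₂ ω ≤ (2 / Real.sqrt n * ∑' r : ℤ, |rhoH H r|) * Z ω
        + 6 * ∑' r : ℤ, |rhoH H r| := by
  have hsum := rhoH_summable H hH
  have np : (0 : ℝ) < n := by exact_mod_cast hn
  have hsqrt : (0 : ℝ) < Real.sqrt n := Real.sqrt_pos.mpr np
  apply ae_of_all
  intro ω
  set s : ℝ := ∑' r : ℤ, |rhoH H r| with hs
  have hs0 : 0 ≤ s := tsum_nonneg fun _ => abs_nonneg _
  set S : ℝ := ∑ k, (X ω k) ^ 2 with hS
  have hS0 : 0 ≤ S := Finset.sum_nonneg fun _ _ => sq_nonneg _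
  set T : ℝ := ∑ k, ∑ l, X ω k * X ω l * rhoH H ((k : ℤ) - (l : ℤ)) with hT
  -- key combinatorial bound
  have hA1 : ∑ k, ∑ l : Fin n, (X ω k) ^ 2 * |rhoH H ((k : ℤ) - (l : ℤ))| ≤ S * s := by
    calc ∑ k, ∑ l : Fin n, (X ω k) ^ 2 * |rhoH H ((k : ℤ) - (l : ℤ))|
        = ∑ k, (X ω k) ^ 2 * ∑ l : Fin n, |rhoH H ((k : ℤ) - (l : ℤ))| := by
          simp [Finset.mul_sum]
      _ ≤ ∑ k, (X ω k) ^ 2 * s := by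
          apply Finset.sum_le_sum
          intro k _
          exact mul_le_mul_of_nonneg_left (sum_abs_rhoH_le H hsum n _) (sq_nonneg _)
      _ = S * s := (Finset.sum_mul ..).symm
  have hA2 : ∑ k : Fin n, ∑ l : Fin n, (X ω l) ^ 2 * |rhoH H ((k : ℤ) - (l : ℤ))| ≤ S * s := by
    rw [Finset.sum_comm]
    calc ∑ l : Fin n, ∑ k : Fin n, (X ω l) ^ 2 * |rhoH H ((k : ℤ) - (l : ℤ))|
        = ∑ l : Fin n, (X ω l) ^ 2 * ∑ k : Fin n, |rhoH H ((l : ℤ) - (k : ℤ))| := by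
          apply Finset.sum_congr rfl
          intro l _
          rw [Finset.mul_sum]
          apply Finset.sum_congr rfl
          intro k _
          congr 1
          rw [show (l : ℤ) - (k : ℤ) = -((k : ℤ) - (l : ℤ)) by ring, rhoH_neg]
      _ ≤ ∑ l : Fin n, (X ω l) ^ 2 * s := by
          apply Finset.sum_le_sum
          intro l _
          exact mul_le_mul_of_nonneg_left (sum_abs_rhoH_le H hsum n _) (sq_nonneg _)
      _ = S * s := (Finset.sum_mul ..).symm
  have hTle : T ≤ S * s := by
    have step : T ≤ ∑ k, ∑ l : Fin n,
        ((X ω k) ^ 2 * |rhoH H ((k : ℤ) - (l : ℤ))|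
          + (X ω l) ^ 2 * |rhoH H ((k : ℤ) - (l : ℤ))|) / 2 := by
      apply Finset.sum_le_sum
      intro k _
      apply Finset.sum_le_sum
      intro l _
      set a := X ω k; set b := X ω l; set c := rhoH H ((k : ℤ) - (l : ℤ))
      nlinarith [sq_nonneg (a - b), sq_nonneg (a + b), abs_nonneg c, le_abs_self c,
        neg_abs_le c]
    have expand : ∑ k, ∑ l : Fin n,
        ((X ω k) ^ 2 * |rhoH H ((k : ℤ) - (l : ℤ))|
          + (X ω l) ^ 2 * |rhoH H ((k : ℤ) - (l : ℤ))|) / 2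
        = (∑ k, ∑ l : Fin n, (X ω k) ^ 2 * |rhoH H ((k : ℤ) - (l : ℤ))|
          + ∑ k : Fin n, ∑ l : Fin n, (X ω l) ^ 2 * |rhoH H ((k : ℤ) - (l : ℤ))|) / 2 := by
      rw [← Finset.sum_add_distrib]
      rw [Finset.sum_div]
      apply Finset.sum_congr rfl
      intro k _
      rw [← Finset.sum_add_distrib, Finset.sum_div]
    rw [expand] at step
    linarith
  -- rewrite Q₂
  have hN : (0:ℝ) < (n : ℝ) ^ (2 * H) := Real.rpow_pos_of_pos np _
  have hQrw : Q₂ ω = 2 * (n : ℝ) ^ (2 * H - 1) * T := by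
    rw [hQ₂ ω]
    have e1 : ∑ k, ∑ l, X ω k * X ω l * (rhoH H ((k : ℤ) - (l : ℤ)) / (n : ℝ) ^ (2 * H))
        = T * ((n : ℝ) ^ (2 * H))⁻¹ := by
      rw [hT, Finset.sum_mul]
      apply Finset.sum_congr rfl
      intro k _
      rw [Finset.sum_mul]
      apply Finset.sum_congr rfl
      intro l _
      ring
    rw [e1]
    have e2 : (n : ℝ) ^ (4 * H - 1) * ((n : ℝ) ^ (2 * H))⁻¹ = (n : ℝ) ^ (2 * H - 1) := by
      rw [← Real.rpow_neg np.le, ← Real.rpow_add np]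
      congr 1; ring
    calc 2 * (n : ℝ) ^ (4 * H - 1) * (T * ((n : ℝ) ^ (2 * H))⁻¹)
        = 2 * ((n : ℝ) ^ (4 * H - 1) * ((n : ℝ) ^ (2 * H))⁻¹) * T := by ring
      _ = 2 * (n : ℝ) ^ (2 * H - 1) * T := by rw [e2]
  have hpow1 : (0:ℝ) < (n : ℝ) ^ (2 * H - 1) := Real.rpow_pos_of_pos np _
  have hQle : Q₂ ω ≤ 2 * (n : ℝ) ^ (2 * H - 1) * (S * s) := by
    rw [hQrw]
    have : (0:ℝ) ≤ 2 * (n : ℝ) ^ (2 * H - 1) := by positivity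
    exact mul_le_mul_of_nonneg_left hTle this
  -- RHS identity
  have h4H : (1:ℝ) ≤ (4:ℝ) ^ H := Real.one_le_rpow (by norm_num) hH.1.le
  have hRHS : (2 / Real.sqrt n * s) * Z ω + 6 * s
      = 2 * (n : ℝ) ^ (2 * H - 1) * (S * s) + 2 * s * ((4:ℝ) ^ H - 1) := by
    rw [hZ ω]
    have h1 : (n : ℝ) ^ (2 * H - 1/2) = (n : ℝ) ^ (2 * H - 1) * Real.sqrt n := by
      rw [Real.sqrt_eq_rpow, ← Real.rpow_add np]
      congr 1; ring
    rw [h1]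
    field_simp
    ring
  rw [hRHS]
  nlinarith [mul_nonneg hs0 (sub_nonneg.mpr h4H)]
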